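/- Let p be a prime number and R a commutative p-torsion-free ring such that every finitely generated p-torsion-free R-module is finitely presented. Let F be a flat R-module. Then the p-adic completion F^∧ = lim_n F/p^nF is a flat R-module and is p-torsion-free. -/

import Mathlib

universe u

private lemma mem_span_pow_smul_top_iff {R : Type u} [CommRing R] {M : Type*} [AddCommGroup M]
    [Module R M] (r : R) (k : ℕ) (x : M) :
    x ∈ (Ideal.span {r} ^ k • ⊤ : Submodule R M) ↔ ∃ y, x = r ^ k • y := by
  rw [Ideal.span_singleton_pow, Submodule.ideal_span_singleton_smul]
  constructor
  · intro h
    obtain ⟨y, -, hy⟩ := Set.mem_smul_set.mp h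
    exact ⟨y, hy.symm⟩
  · rintro ⟨y, rfl⟩
    exact Submodule.smul_mem_pointwise_smul y _ ⊤ trivial

private lemma pow_smul_cancel {R : Type u} [CommRing R] {M : Type*} [AddCommGroup M]
    [Module R M] (r : R) (htf : ∀ v : M, r • v = 0 → v = 0) (k : ℕ) (v w : M)
    (h : r ^ k • v = r ^ k • w) : v = w := by
  induction k generalizing v w with
  | zero => simpa using h
  | succ k ih =>
      rw [pow_succ, mul_smul, mul_smul] at h
      have h2 := ih _ _ h
      have h3 : r • (v - w) = 0 := by rw [smul_sub, sub_eq_zero]; exact h2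
      have := htf _ h3
      rwa [sub_eq_zero] at this

private lemma flat_smul_tf {R F : Type u} [CommRing R] [AddCommGroup F] [Module R F]
    [Module.Flat R F] (r : R) (hR : ∀ a : R, r * a = 0 → a = 0) (v : F) (hv : r • v = 0) :
    v = 0 := by
  have h : ∑ _i : PUnit.{u+1}, r • v = 0 := by simpa using hv
  obtain ⟨κ, B, y, hBy, hBf⟩ := Module.Flat.isTrivialRelation_of_sum_smul_eq_zero
    (f := fun _ : PUnit.{u+1} => r) (x := fun _ => v) h
  rw [show v = (fun _ : PUnit.{u+1} => v) PUnit.unit from rfl, hBy PUnit.unit]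
  refine Finset.sum_eq_zero fun j _ => ?_
  have hb : r * B PUnit.unit j = 0 := by simpa using hBf j
  rw [hR _ hb, zero_smul]

private lemma adicCompletion_tf {R F : Type u} [CommRing R] [AddCommGroup F] [Module R F]
    (r : R) (htf : ∀ v : F, r • v = 0 → v = 0)
    (z : AdicCompletion (Ideal.span {r}) F) (hz : r • z = 0) : z = 0 := by
  apply AdicCompletion.ext
  intro k
  rw [AdicCompletion.val_zero_apply]
  obtain ⟨w, hw⟩ := Submodule.Quotient.mk_surjective _ (z.val (k+1))
  have h1 : (r • z).val (k+1) = 0 := by rw [hz, AdicCompletion.val_zero_apply]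
  rw [AdicCompletion.val_smul_apply, ← hw, ← Submodule.Quotient.mk_smul,
    Submodule.Quotient.mk_eq_zero] at h1
  obtain ⟨u, hu⟩ := (mem_span_pow_smul_top_iff r (k+1) _).mp h1
  have hwu : w = r ^ k • u := by
    rw [← sub_eq_zero]
    apply htf (w - r ^ k • u)
    rw [smul_sub, sub_eq_zero, ← mul_smul, ← pow_succ']
    exact hu
  have h2 : z.val k = AdicCompletion.transitionMap (Ideal.span {r}) F (Nat.le_succ k)
      (z.val (k+1)) := (z.property (Nat.le_succ k)).symm
  rw [h2, ← hw]
  change (Submodule.Quotient.mk w : F ⧸ ((Ideal.span {r}) ^ k • ⊤ : Submodule R F)) = 0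
  rw [hwu, Submodule.Quotient.mk_eq_zero]
  exact (mem_span_pow_smul_top_iff r k _).mpr ⟨u, rfl⟩

/-- Let `p` be a prime and `R` a commutative `p`-torsion-free ring such
that every finitely generated `p`-torsion-free `R`-module is finitely presented.  Then the
`p`-adic completion `F^∧` of a flat `R`-module `F` is flat over `R` and `p`-torsion-free. -/
theorem adicCompletion_flat_and_pTorsionFree
    (p : ℕ) (hp : p.Prime) (R : Type u) [CommRing R]
    (hR : Function.Injective (fun r : R => (p : R) * r))
    (HFP : ∀ (M : Type u) [AddCommGroup M] [Module R M],
      Module.Finite R M →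
      Function.Injective (fun m : M => (p : R) • m) →
      Module.FinitePresentation R M)
    (F : Type u) [AddCommGroup F] [Module R F] [Module.Flat R F] :
    Module.Flat R (AdicCompletion (Ideal.span {(p : R)}) F) ∧
      Function.Injective
        (fun x : AdicCompletion (Ideal.span {(p : R)}) F => (p : R) • x) := by
  classical
  set q : R := (p : R) with hq
  have hRtf : ∀ a : R, q * a = 0 → a = 0 := by
    intro a ha
    exact hR (show q * a = q * 0 by rw [ha, mul_zero])
  have hFtf : ∀ v : F, q • v = 0 → v = 0 := fun v hv => flat_smul_tf q hRtf v hv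
  have htors : Function.Injective
      (fun x : AdicCompletion (Ideal.span {q}) F => q • x) := by
    intro x y hxy
    have h : q • (x - y) = 0 := by
      rw [smul_sub, sub_eq_zero]; exact hxy
    have := adicCompletion_tf q hFtf (x - y) h
    rwa [sub_eq_zero] at this
  refine ⟨?_, htors⟩
  rw [Module.Flat.iff_forall_isTrivialRelation]
  suffices hsuff : ∀ (ι : Type) [Fintype ι] (f : ι → R) (x : ι → AdicCompletion (Ideal.span {q}) F),
      ∑ i, f i • x i = 0 → Module.IsTrivialRelation f x by
    intro l f x h
    exact hsuff (Fin l) f x h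
  intro ι _ f x hsum
  -- the ideal generated by the f i
  set J : Submodule R R := Submodule.span R (Set.range f) with hJ
  have hJfg : J.FG := Submodule.fg_span (Set.finite_range f)
  haveI hJfin : Module.Finite R ↥J := Module.Finite.iff_fg.mpr hJfg
  have hJtf : Function.Injective (fun m : ↥J => q • m) := by
    intro m m' h
    ext
    apply hR
    have := congrArg (Subtype.val) h
    simpa [smul_eq_mul] using this
  haveI hJfp : Module.FinitePresentation R ↥J := HFP ↥J hJfin hJtf
  -- the linear map (ι → R) → R with range J
  set lf : (ι → R) →ₗ[R] R := Fintype.linearCombination R f with hlf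
  have hlfapp : ∀ c : ι → R, lf c = ∑ i, c i * f i := fun c => rfl
  have hrange : LinearMap.range lf = J := Fintype.range_linearCombination R f
  have hmem : ∀ c, lf c ∈ J := fun c => hrange ▸ LinearMap.mem_range_self lf c
  set lf' : (ι → R) →ₗ[R] ↥J := LinearMap.codRestrict J lf hmem with hlf'
  have hlf'surj : Function.Surjective lf' := by
    intro y
    obtain ⟨c, hc⟩ := hrange.ge y.2
    exact ⟨c, Subtype.ext hc⟩
  have hsyzfg : (LinearMap.ker lf).FG := by
    have := Module.FinitePresentation.fg_ker lf' hlf'surj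
    rwa [LinearMap.ker_codRestrict] at this
  obtain ⟨m, s, hs⟩ := Submodule.fg_iff_exists_fin_generating_family.mp hsyzfg
  have hsyz : ∀ j, ∑ i, s j i * f i = 0 := by
    intro j
    have : s j ∈ LinearMap.ker lf := by
      rw [← hs]; exact Submodule.subset_span (Set.mem_range_self j)
    simpa [hlfapp] using this
  -- the maps G and phi
  set G : (Fin m → F) → (ι → F) := fun b i => ∑ j, s j i • b j with hG
  set φ : (ι → F) → F := fun v => ∑ i, f i • v i with hφ
  have hφsub : ∀ v w, φ (v - w) = φ v - φ w := by
    intro v w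
    simp [hφ, smul_sub, Finset.sum_sub_distrib]
  have hφsmul : ∀ (t : R) w, φ (t • w) = t • φ w := by
    intro t w
    simp [hφ, Finset.smul_sum, smul_comm t]
  have hφG : ∀ b, φ (G b) = 0 := by
    intro b
    show (∑ i, f i • ∑ j, s j i • b j) = 0
    calc ∑ i, f i • ∑ j, s j i • b j
        = ∑ i, ∑ j, (s j i * f i) • b j := by
          refine Finset.sum_congr rfl fun i _ => ?_
          rw [Finset.smul_sum]
          exact Finset.sum_congr rfl fun j _ => by rw [smul_smul, mul_comm]
      _ = ∑ j, ∑ i, (s j i * f i) • b j := Finset.sum_comm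
      _ = ∑ j, (∑ i, s j i * f i) • b j := by simp [Finset.sum_smul]
      _ = 0 := by simp [hsyz]
  have hker : ∀ v : ι → F, φ v = 0 → ∃ b, v = G b := by
    intro v hv
    obtain ⟨κ, B, y, hBy, hBf⟩ :=
      Module.Flat.isTrivialRelation_of_sum_smul_eq_zero (f := f) (x := v) hv
    have hcol : ∀ j : Fin κ, (fun i => B i j) ∈ LinearMap.ker lf := by
      intro j
      simp only [LinearMap.mem_ker, hlfapp]
      calc ∑ i, B i j * f i = ∑ i, f i * B i j := by simp [mul_comm]
        _ = 0 := hBf j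
    have hcol' : ∀ j : Fin κ, ∃ c : Fin m → R, ∑ t, c t • s t = fun i => B i j := by
      intro j
      have hj := hcol j
      rw [← hs] at hj
      exact (Submodule.mem_span_range_iff_exists_fun R).mp hj
    choose C hC using hcol'
    refine ⟨fun t => ∑ j, C j t • y j, ?_⟩
    funext i
    rw [hBy i]
    have hCi : ∀ j, ∑ t, C j t * s t i = B i j := by
      intro j
      have := congrFun (hC j) i
      simpa [Finset.sum_apply] using this
    calc ∑ j, B i j • y j = ∑ j, (∑ t, C j t * s t i) • y j := by
          simp only [hCi]
      _ = ∑ j, ∑ t, (C j t * s t i) • y j := by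
          simp [Finset.sum_smul]
      _ = ∑ t, ∑ j, (C j t * s t i) • y j := Finset.sum_comm
      _ = ∑ t, s t i • ∑ j, C j t • y j := by
          refine Finset.sum_congr rfl fun t _ => ?_
          rw [Finset.smul_sum]
          refine Finset.sum_congr rfl fun j _ => ?_
          rw [smul_smul, mul_comm]
      _ = G (fun t => ∑ j, C j t • y j) i := rfl
  -- the saturation J' of J and the Artin-Rees constant c
  set J' : Submodule R R :=
    { carrier := {y : R | ∃ k : ℕ, q ^ k * y ∈ J}
      add_mem' := by
        rintro a b ⟨k, hk⟩ ⟨l, hl⟩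
        refine ⟨k + l, ?_⟩
        rw [mul_add]
        refine Submodule.add_mem J ?_ ?_
        · rw [pow_add, mul_comm (q ^ k), mul_assoc]
          exact Submodule.smul_mem J _ hk
        · rw [pow_add, mul_assoc]
          exact Submodule.smul_mem J _ hl
      zero_mem' := ⟨0, by simpa using Submodule.zero_mem J⟩
      smul_mem' := by
        rintro r a ⟨k, hk⟩
        refine ⟨k, ?_⟩
        rw [smul_eq_mul, mul_left_comm]
        exact Submodule.smul_mem J r hk } with hJ'
  have hJ'mem : ∀ y : R, y ∈ J' ↔ ∃ k : ℕ, q ^ k * y ∈ J := fun y => Iff.rfl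
  haveI : Module.Finite R (R ⧸ J') :=
    Module.Finite.of_surjective J'.mkQ (Submodule.mkQ_surjective J')
  have hQtf : Function.Injective (fun z : R ⧸ J' => q • z) := by
    intro z z' hzz
    rw [← sub_eq_zero]
    obtain ⟨y, hy⟩ := Submodule.Quotient.mk_surjective J' (z - z')
    have h0 : q • (z - z') = 0 := by
      rw [smul_sub, sub_eq_zero]; exact hzz
    rw [← hy, ← Submodule.Quotient.mk_smul, Submodule.Quotient.mk_eq_zero] at h0
    have : y ∈ J' := by
      obtain ⟨k, hk⟩ := (hJ'mem _).mp h0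
      refine (hJ'mem y).mpr ⟨k + 1, ?_⟩
      rw [pow_succ, mul_assoc]
      simpa [smul_eq_mul] using hk
    rw [← hy, Submodule.Quotient.mk_eq_zero]
    exact this
  have hJ'fg : J'.FG := by
    haveI := HFP (R ⧸ J') inferInstance hQtf
    have := Module.FinitePresentation.fg_ker J'.mkQ (Submodule.mkQ_surjective J')
    rwa [Submodule.ker_mkQ] at this
  obtain ⟨T, hT⟩ := hJ'fg
  have hTJ' : ∀ t : R, t ∈ T → ∃ k : ℕ, q ^ k * t ∈ J := by
    intro t ht
    exact (hJ'mem t).mp (hT ▸ Submodule.subset_span ht)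
  set c : ℕ := T.attach.sup (fun t => (hTJ' t.1 t.2).choose) with hc0
  have hc : ∀ y : R, y ∈ J' → q ^ c * y ∈ J := by
    intro y hy
    rw [← hT] at hy
    induction hy using Submodule.span_induction with
    | mem t ht =>
        have hkt := (hTJ' t ht).choose_spec
        have hle : (hTJ' t ht).choose ≤ c := by
          rw [hc0]
          exact Finset.le_sup (f := fun t : {x // x ∈ T} => (hTJ' t.1 t.2).choose)
            (Finset.mem_attach T ⟨t, ht⟩)
        have : q ^ c * t = q ^ (c - (hTJ' t ht).choose) * (q ^ (hTJ' t ht).choose * t) := by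
          rw [← mul_assoc, ← pow_add, Nat.sub_add_cancel hle]
        rw [this]
        exact Submodule.smul_mem J _ hkt
    | zero => simpa using Submodule.zero_mem J
    | add a b _ _ ha hb =>
        rw [mul_add]
        exact Submodule.add_mem J ha hb
    | smul r a _ ha =>
        rw [smul_eq_mul, mul_left_comm]
        exact Submodule.smul_mem J r ha
  -- key approximation lemma
  have hJmemf : ∀ i, f i ∈ J := fun i => Submodule.subset_span (Set.mem_range_self i)
  have K : ∀ (k : ℕ) (v : ι → F) (u : F), φ v = q ^ (k + c) • u →
      ∃ (b : Fin m → F) (w : ι → F), v = G b + q ^ k • w := by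
    intro k v u huv
    set g : Option ι → R := fun o => o.elim (q ^ (k + c)) (fun i => - f i) with hg
    set vec : Option ι → F := fun o => o.elim u (fun i => v i) with hvec
    have hrel : ∑ o : Option ι, g o • vec o = 0 := by
      rw [Fintype.sum_option]
      have : ∑ i : ι, g (some i) • vec (some i) = - φ v := by
        simp [hg, hvec, hφ, neg_smul, Finset.sum_neg_distrib]
      rw [this]
      simp only [hg, hvec, Option.elim]
      rw [huv, add_neg_cancel]
    obtain ⟨κ, B, y, hBy, hBf⟩ :=
      Module.Flat.isTrivialRelation_of_sum_smul_eq_zero (f := g) (x := vec) hrel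
    have hBnone : ∀ j, B none j ∈ J' := by
      intro j
      refine (hJ'mem _).mpr ⟨k + c, ?_⟩
      have h1 := hBf j
      rw [Fintype.sum_option] at h1
      have h2 : g none * B none j = ∑ i, f i * B (some i) j := by
        have : ∑ i : ι, g (some i) * B (some i) j = - ∑ i, f i * B (some i) j := by
          simp [hg, Finset.sum_neg_distrib]
        rw [this] at h1
        linear_combination h1
      rw [hg] at h2
      simp only [Option.elim] at h2
      rw [h2]
      exact Submodule.sum_mem J fun i _ => by rw [mul_comm]; exact Submodule.smul_mem J _ (hJmemf i)
    have hDex : ∀ j, ∃ d : ι → R, ∑ i, d i • f i = q ^ c * B none j := by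
      intro j
      have := hc _ (hBnone j)
      rw [hJ] at this
      exact (Submodule.mem_span_range_iff_exists_fun R).mp this
    choose D hD using hDex
    set a' : ι → F := fun i => ∑ j, D j i • y j with ha'
    have hu : u = ∑ j, B none j • y j := by
      have := hBy none
      simpa [hvec] using this
    have hφa' : φ a' = q ^ c • u := by
      calc φ a' = ∑ i, f i • ∑ j, D j i • y j := rfl
        _ = ∑ i, ∑ j, (D j i * f i) • y j := by
            refine Finset.sum_congr rfl fun i _ => ?_
            rw [Finset.smul_sum]
            exact Finset.sum_congr rfl fun j _ => by rw [smul_smul, mul_comm]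
        _ = ∑ j, ∑ i, (D j i * f i) • y j := Finset.sum_comm
        _ = ∑ j, (∑ i, D j i * f i) • y j := by simp [Finset.sum_smul]
        _ = ∑ j, (q ^ c * B none j) • y j := by
            refine Finset.sum_congr rfl fun j _ => ?_
            have := hD j
            simp only [smul_eq_mul] at this
            rw [this]
        _ = q ^ c • ∑ j, B none j • y j := by
            rw [Finset.smul_sum]
            exact Finset.sum_congr rfl fun j _ => by rw [smul_smul]
        _ = q ^ c • u := by rw [← hu]
    have hφdiff : φ (v - q ^ k • a') = 0 := by
      rw [hφsub, hφsmul, hφa', huv, smul_smul, ← pow_add, sub_self]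
    obtain ⟨b, hb⟩ := hker _ hφdiff
    exact ⟨b, a', by rw [← hb]; abel⟩

  -- Cauchy sequence representatives of the x i
  have hxA := fun i => AdicCompletion.mk_surjective (Ideal.span {q}) F (x i)
  choose A hA using hxA
  set a : ℕ → ι → F := fun k i => (A i) k with ha
  have hgap : ∀ (k l : ℕ), k ≤ l → ∀ i, ∃ d, a l i - a k i = q ^ k • d := by
    intro k l hkl i
    have h1 := AdicCompletion.AdicCauchySequence.mk_eq_mk (I := Ideal.span {q}) (M := F) hkl (A i)
    have h2 : a l i - a k i ∈ ((Ideal.span {q}) ^ k • ⊤ : Submodule R F) := (Submodule.Quotient.eq _).mp h1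
    exact (mem_span_pow_smul_top_iff q k _).mp h2
  have hgapv : ∀ (k l : ℕ), k ≤ l → ∃ d : ι → F, ∀ i, a l i - a k i = q ^ k • d i := by
    intro k l hkl
    choose d hd using hgap k l hkl
    exact ⟨d, hd⟩
  have hφa : ∀ k, ∃ u, φ (a k) = q ^ k • u := by
    intro k
    have h0 := congrArg (AdicCompletion.eval (Ideal.span {q}) F k) hsum
    rw [map_zero, map_sum] at h0
    have h1 : ∀ i, AdicCompletion.eval (Ideal.span {q}) F k (f i • x i) =
        Submodule.mkQ ((Ideal.span {q}) ^ k • ⊤ : Submodule R F) (f i • a k i) := by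
      intro i
      rw [map_smul, ← hA i, AdicCompletion.eval_apply, AdicCompletion.mk_apply_coe, map_smul]
    rw [Finset.sum_congr rfl (fun i _ => h1 i), ← map_sum, Submodule.mkQ_apply,
      Submodule.Quotient.mk_eq_zero] at h0
    exact (mem_span_pow_smul_top_iff q k _).mp h0
  -- the inductive approximation
  set Q : ℕ → (Fin m → F) → Prop :=
    fun k b => ∃ e : ι → F, ∀ i, a (k + c) i - G b i = q ^ k • e i with hQ
  have base : Q 0 0 := ⟨fun i => a (0 + c) i - G 0 i, fun i => by rw [pow_zero, one_smul]⟩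
  have hGlin : ∀ (b d : Fin m → F) (t : R) (i : ι),
      G (b + t • d) i = G b i + t • G d i := by
    intro b d t i
    show (∑ j, s j i • (b j + t • d j)) = (∑ j, s j i • b j) + t • ∑ j, s j i • d j
    rw [Finset.smul_sum, ← Finset.sum_add_distrib]
    refine Finset.sum_congr rfl fun j _ => ?_
    rw [smul_add, smul_comm]
  have step : ∀ (k : ℕ) (b : Fin m → F), Q k b → ∃ d, Q (k + 1) (b + q ^ k • d) := by
    intro k b hb
    obtain ⟨e, he⟩ := hb
    obtain ⟨dv, hdv⟩ := hgapv (k + c) (k + 1 + c) (by omega)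
    set E : ι → F := fun i => q ^ c • dv i + e i with hEdef
    have hE : ∀ i, a (k + 1 + c) i - G b i = q ^ k • E i := by
      intro i
      have : a (k + 1 + c) i - G b i = (a (k + 1 + c) i - a (k + c) i) +
          (a (k + c) i - G b i) := by abel
      rw [this, hdv i, he i, hEdef]
      rw [smul_add, ← mul_smul, ← pow_add]
    obtain ⟨u, hu⟩ := hφa (k + 1 + c)
    have hφE : φ E = q ^ (1 + c) • u := by
      apply pow_smul_cancel q hFtf k
      have h1 : q ^ k • E = a (k + 1 + c) - G b := by
        funext i
        rw [Pi.smul_apply, Pi.sub_apply, hE i]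
      rw [← hφsmul, h1, hφsub, hφG, sub_zero, hu, smul_smul, ← pow_add,
        ← Nat.add_assoc]
    obtain ⟨d, w, hdw⟩ := K 1 E u hφE
    refine ⟨d, w, fun i => ?_⟩
    have h2 : a (k + 1 + c) i - G (b + q ^ k • d) i = q ^ k • E i - q ^ k • G d i := by
      rw [hGlin b d (q ^ k) i]
      rw [show a (k + 1 + c) i - (G b i + q ^ k • G d i)
        = (a (k + 1 + c) i - G b i) - q ^ k • G d i by abel, hE i]
    rw [h2, ← smul_sub]
    have h3 : E i - G d i = q • w i := by
      have := congrFun hdw i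
      rw [Pi.add_apply, Pi.smul_apply, pow_one] at this
      rw [this]; abel
    rw [h3, ← mul_smul, ← pow_succ]
  choose D hD using step
  let Bc : ∀ k : ℕ, {b : Fin m → F // Q k b} := fun k =>
    Nat.rec ⟨0, base⟩ (fun k ih => ⟨ih.1 + q ^ k • D k ih.1 ih.2, hD k ih.1 ih.2⟩) k
  have hBsucc : ∀ k, (Bc (k + 1)).1 = (Bc k).1 + q ^ k • D k (Bc k).1 (Bc k).2 :=
    fun k => rfl
  have hseq : ∀ t : Fin m, ∀ k : ℕ,
      (Bc k).1 t ≡ (Bc (k + 1)).1 t [SMOD ((Ideal.span {q}) ^ k • ⊤ : Submodule R F)] := by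
    intro t k
    rw [SModEq.sub_mem, hBsucc k]
    refine (mem_span_pow_smul_top_iff q k _).mpr ⟨-(D k (Bc k).1 (Bc k).2 t), ?_⟩
    rw [smul_neg]
    simp
  set seq : Fin m → AdicCompletion.AdicCauchySequence (Ideal.span {q}) F :=
    fun t => AdicCompletion.AdicCauchySequence.mk (Ideal.span {q}) F (fun k => (Bc k).1 t) (hseq t) with hseqdef
  refine ⟨m, fun i j => s j i,
    fun j => AdicCompletion.mk (Ideal.span {q}) F (seq j), fun i => ?_, fun j => ?_⟩
  · -- x i = ∑ j, s j.down i • mk (seq j.down)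
    rw [← hA i]
    apply AdicCompletion.ext
    intro k
    rw [AdicCompletion.val_sum_apply]
    have h1 : ∀ j : Fin m,
        (s j i • AdicCompletion.mk (Ideal.span {q}) F (seq j)).val k =
        Submodule.mkQ ((Ideal.span {q}) ^ k • ⊤ : Submodule R F) (s j i • (Bc k).1 j) := by
      intro j
      rw [AdicCompletion.val_smul_apply, AdicCompletion.mk_apply_coe, map_smul]
      rfl
    rw [Finset.sum_congr rfl (fun j _ => h1 j), ← map_sum]
    have h2 : ∑ j : Fin m, s j i • (Bc k).1 j = G (Bc k).1 i := by
      rfl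
    rw [h2, AdicCompletion.mk_apply_coe, Submodule.mkQ_apply, Submodule.mkQ_apply,
      Submodule.Quotient.eq]
    obtain ⟨e, he⟩ := (Bc k).2
    obtain ⟨d, hd⟩ := hgap k (k + c) (by omega) i
    have h3 : a k i - G (Bc k).1 i = q ^ k • (e i - d) := by
      have : a k i - G (Bc k).1 i = (a (k + c) i - G (Bc k).1 i) -
          (a (k + c) i - a k i) := by abel
      rw [this, he i, hd, ← smul_sub]
    show A i k - G (Bc k).1 i ∈ ((Ideal.span {q}) ^ k • ⊤ : Submodule R F)
    exact (mem_span_pow_smul_top_iff q k _).mpr ⟨e i - d, h3⟩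
  · -- syzygy condition
    have := hsyz j
    calc ∑ i, f i * s j i = ∑ i, s j i * f i := by
          exact Finset.sum_congr rfl fun i _ => mul_comm _ _
      _ = 0 := hsyz j
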